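/- Fix A, k, σ, γ, η, c > 0, an integer bound q̄ ≥ 1, an integer q with |q| ≤ q̄, and reals y, y₊, y₋ < 0. Define Δ(z) := max(−δ∞, min(δ∞, −z + (1/γ)·log(1+σγ/k))), H¹_E(q,y) := sup_{z∈ℝ} (ησ²/2)·y·(γ(z+q)² + ηz²), H⁰_E(y,y') := sup_{ζ∈ℝ} A e^{−k(Δ(ζ)+c)/σ}·[ y' e^{η(ζ−c)} − y( 1 + (η/γ)(1 − e^{−γ(ζ+Δ(ζ))}) ) ], and H_E(q,y,y₊,y₋) := H¹_E(q,y) + 1_{q>−q̄}·H⁰_E(y,y₋) + 1_{q<q̄}·H⁰_E(y,y₊). Assume δ∞ ≥ C∞ + max( |(1/η)log(y/y₊)|, |(1/η)log(y/y₋)| ), with C∞ := c + log[ (1 + σγ/k)^{1/η + 1/γ} / (1 − σ²γη/((k+σγ)(k+ση)))^{1/η} ]. Then H_E(q,y,y₊,y₋) = (γη²σ²/(2(γ+η)))·q²·y − C₀·y·[ 1_{q>−q̄}·(y/y₋)^{k/(ση)} + 1_{q<q̄}·(y/y₊)^{k/(ση)} ], where C₀ := A·(ση/k)·(1+σγ/k)^{−k/(σγ)}·(1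 − σ²γη/((k+σγ)(k+ση)))^{1+k/(ση)}. -/

import Mathlib

open Real

private lemma key_amgm (p δ₀ u : ℝ) (hp : 0 < p) (hδ : 0 < δ₀) (hu : 0 < u) :
    u ^ p * (δ₀ - u) ≤ (p * δ₀ / (p + 1)) ^ p * (δ₀ / (p + 1)) := by
  have hp1 : 0 < p + 1 := by linarith
  have hu' : 0 < p * δ₀ / (p + 1) := by positivity
  have hd' : 0 < δ₀ / (p + 1) := by positivity
  by_cases h : δ₀ - u ≤ 0
  · have h1 : u ^ p * (δ₀ - u) ≤ 0 :=
      mul_nonpos_of_nonneg_of_nonpos (Real.rpow_nonneg hu.le p) h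
    nlinarith [Real.rpow_pos_of_pos hu' p]
  · push_neg at h
    set u' := p * δ₀ / (p + 1) with hu'def
    have hdu' : δ₀ - u' = δ₀ / (p + 1) := by rw [hu'def]; field_simp; ring
    rw [← hdu']
    have hdu'pos : 0 < δ₀ - u' := by rw [hdu']; positivity
    have l1 : Real.log u - Real.log u' ≤ u / u' - 1 := by
      have := Real.log_le_sub_one_of_pos (div_pos hu hu')
      rwa [Real.log_div hu.ne' hu'.ne'] at this
    have l2 : Real.log (δ₀ - u) - Real.log (δ₀ - u') ≤ (δ₀ - u) / (δ₀ - u') - 1 := by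
      have := Real.log_le_sub_one_of_pos (div_pos h hdu'pos)
      rwa [Real.log_div h.ne' hdu'pos.ne'] at this
    have lin : Real.log u * p + Real.log (δ₀ - u) ≤ Real.log u' * p + Real.log (δ₀ - u') := by
      have e0 : p * (u / u' - 1) + ((δ₀ - u) / (δ₀ - u') - 1) = 0 := by
        rw [hdu', hu'def]; field_simp; ring
      nlinarith [mul_le_mul_of_nonneg_left l1 hp.le]
    calc u ^ p * (δ₀ - u) = Real.exp (Real.log u * p + Real.log (δ₀ - u)) := by
          rw [Real.exp_add, Real.rpow_def_of_pos hu, Real.exp_log h]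
      _ ≤ Real.exp (Real.log u' * p + Real.log (δ₀ - u')) := Real.exp_le_exp.2 lin
      _ = u' ^ p * (δ₀ - u') := by
          rw [Real.exp_add, Real.rpow_def_of_pos hu', Real.exp_log hdu'pos]

private lemma expLB (a b : ℝ) : Real.exp b * (a - b + 1) ≤ Real.exp a := by
  have h := Real.add_one_le_exp (a - b)
  have h2 := mul_le_mul_of_nonneg_left h (Real.exp_pos b).le
  rw [← Real.exp_add] at h2
  calc Real.exp b * (a - b + 1) = Real.exp b * (a - b + 1) := rfl
    _ ≤ Real.exp (b + (a - b)) := h2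
    _ = Real.exp a := by ring_nf

private lemma mono2 (γ η y y' t E1 E1b E2 E2b : ℝ) (hγ : 0 < γ) (hη : 0 < η)
    (hy : y < 0) (hy' : y' < 0) (ht : 0 ≤ t)
    (h1 : E1b * (1 - η * t) ≤ E1) (h2 : E2b * (1 + γ * t) ≤ E2)
    (hB : (-y') * E1b ≤ (-y) * E2b) :
    y' * E1 + y * (η / γ) * E2 ≤ y' * E1b + y * (η / γ) * E2b := by
  have s1 : y' * E1 ≤ y' * (E1b * (1 - η * t)) := mul_le_mul_of_nonpos_left h1 hy'.le
  have hc2 : y * (η / γ) ≤ 0 := mul_nonpos_of_nonpos_of_nonneg hy.le (by positivity)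
  have s2 : y * (η / γ) * E2 ≤ y * (η / γ) * (E2b * (1 + γ * t)) :=
    mul_le_mul_of_nonpos_left h2 hc2
  have s3 : 0 ≤ (η * t) * ((-y) * E2b - (-y') * E1b) :=
    mul_nonneg (by positivity) (by linarith)
  have e : y' * (E1b * (1 - η * t)) + y * (η / γ) * (E2b * (1 + γ * t))
      = (y' * E1b + y * (η / γ) * E2b) - (η * t) * ((-y) * E2b - (-y') * E1b) := by
    field_simp; ring
  linarith

private lemma mono3 (γ η y y' t E1 E1b E2 E2b : ℝ) (hγ : 0 < γ) (hη : 0 < η)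
    (hy : y < 0) (hy' : y' < 0) (ht : 0 ≤ t)
    (h1 : E1b * (1 + η * t) ≤ E1) (h2 : E2b * (1 - γ * t) ≤ E2)
    (hB : (-y) * E2b ≤ (-y') * E1b) :
    y' * E1 + y * (η / γ) * E2 ≤ y' * E1b + y * (η / γ) * E2b := by
  have s1 : y' * E1 ≤ y' * (E1b * (1 + η * t)) := mul_le_mul_of_nonpos_left h1 hy'.le
  have hc2 : y * (η / γ) ≤ 0 := mul_nonpos_of_nonpos_of_nonneg hy.le (by positivity)
  have s2 : y * (η / γ) * E2 ≤ y * (η / γ) * (E2b * (1 - γ * t)) :=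
    mul_le_mul_of_nonpos_left h2 hc2
  have s3 : 0 ≤ (η * t) * ((-y') * E1b - (-y) * E2b) :=
    mul_nonneg (by positivity) (by linarith)
  have e : y' * (E1b * (1 + η * t)) + y * (η / γ) * (E2b * (1 - γ * t))
      = (y' * E1b + y * (η / γ) * E2b) - (η * t) * ((-y') * E1b - (-y) * E2b) := by
    field_simp; ring
  linarith

set_option maxHeartbeats 2000000 in
private lemma H0_eq (A k σ γ η c δinf y y' : ℝ)
    (hA : 0 < A) (hk : 0 < k) (hσ : 0 < σ) (hγ : 0 < γ) (hη : 0 < η) (hc : 0 < c)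
    (hy : y < 0) (hy' : y' < 0)
    (hδ : c + Real.log ((1 + σ * γ / k) ^ (1 / η + 1 / γ) /
          (1 - σ ^ 2 * γ * η / ((k + σ * γ) * (k + σ * η))) ^ (1 / η))
        + |(1 / η) * Real.log (y / y')| ≤ δinf) :
    sSup (Set.range fun ζ : ℝ =>
        A * Real.exp (-k * ((max (-δinf) (min δinf (-ζ + (1 / γ) * Real.log (1 + σ * γ / k)))) + c) / σ) *
          (y' * Real.exp (η * (ζ - c)) -
            y * (1 + (η / γ) * (1 - Real.exp (-γ * (ζ + (max (-δinf) (min δinf (-ζ + (1 / γ) * Real.log (1 + σ * γ / k))))))))))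
      = -(A * (σ * η / k) * (1 + σ * γ / k) ^ (-(k / (σ * γ))) *
          (1 - σ ^ 2 * γ * η / ((k + σ * γ) * (k + σ * η))) ^ (1 + k / (σ * η))) * y *
          (y / y') ^ (k / (σ * η)) := by
  set L := 1 + σ * γ / k with hLdef
  have hL1 : 1 < L := by
    have : 0 < σ * γ / k := by positivity
    rw [hLdef]; linarith
  have hL0 : 0 < L := by linarith
  set lL := Real.log L with hlLdef
  have hlL : 0 < lL := Real.log_pos hL1
  set D := 1 - σ ^ 2 * γ * η / ((k + σ * γ) * (k + σ * η)) with hDdef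
  have hkγ : 0 < k + σ * γ := by positivity
  have hkη : 0 < k + σ * η := by positivity
  have hD0 : 0 < D := by
    have h : σ ^ 2 * γ * η / ((k + σ * γ) * (k + σ * η)) < 1 := by
      rw [div_lt_one (by positivity)]
      nlinarith [mul_pos hk hk, mul_pos (mul_pos hk hσ) hη, mul_pos (mul_pos hk hσ) hγ]
    rw [hDdef]; linarith
  have hD1 : D < 1 := by
    have : 0 < σ ^ 2 * γ * η / ((k + σ * γ) * (k + σ * η)) := by positivity
    rw [hDdef]; linarith
  set lD := Real.log D with hlDdef
  have hlD : lD < 0 := Real.log_neg hD0 hD1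
  set r := y / y' with hrdef
  have hyy : (0:ℝ) < -y := by linarith
  have hyy' : (0:ℝ) < -y' := by linarith
  have hr : 0 < r := by
    rw [hrdef, show y / y' = (-y) / (-y') from by ring]
    exact div_pos hyy hyy'
  set lr := Real.log r with hlrdef
  have hlr_def : lr = Real.log (-y) - Real.log (-y') := by
    rw [hlrdef, hrdef, show y / y' = (-y) / (-y') from by ring,
      Real.log_div hyy.ne' hyy'.ne']
  set m := (1 / γ) * lL with hmdef
  have hm : 0 < m := by rw [hmdef]; positivity
  set p := k / (σ * η) with hpdef
  have hp : 0 < p := by rw [hpdef]; positivity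
  -- rewrite hδ
  have hδ2 : c + ((1 / η + 1 / γ) * lL - (1 / η) * lD) + (1 / η) * |lr| ≤ δinf := by
    rw [Real.log_div (Real.rpow_pos_of_pos hL0 _).ne' (Real.rpow_pos_of_pos hD0 _).ne',
      Real.log_rpow hL0, Real.log_rpow hD0, abs_mul,
      abs_of_pos (show (0:ℝ) < 1 / η by positivity)] at hδ
    linarith [hδ]
  have hδη : η * c + (η / γ) * lL + lL - lD + |lr| ≤ η * δinf := by
    have h1 := mul_le_mul_of_nonneg_left hδ2 hη.le
    have e : η * (c + ((1 / η + 1 / γ) * lL - (1 / η) * lD) + (1 / η) * |lr|)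
        = η * c + (η / γ) * lL + lL - lD + |lr| := by
      field_simp; ring
    linarith [e ▸ h1]
  have hδpos : 0 < δinf := by
    nlinarith [abs_nonneg lr, mul_pos hη hc, mul_pos (div_pos hη hγ) hlL]
  have hγm : γ * m = lL := by rw [hmdef]; field_simp
  have hexpm : Real.exp (-(γ * m)) = L⁻¹ := by
    rw [hγm, Real.exp_neg, hlLdef, Real.exp_log hL0]
  have hLpow : L ^ (-(k / (σ * γ))) = Real.exp (-((k / σ) * m)) := by
    rw [Real.rpow_def_of_pos hL0, ← hlLdef]
    congr 1
    rw [hmdef]; field_simp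
  have hDpow : D ^ (1 + p) = D * D ^ p := by
    rw [Real.rpow_add hD0, Real.rpow_one]
  have hrp2 : r ^ p = (-y) ^ p / (-y') ^ p := by
    rw [hrdef, show y / y' = (-y) / (-y') from by ring, Real.div_rpow hyy.le hyy'.le]
  set M := 1 + (η / γ) * (1 - L⁻¹) with hMdef
  have hLinv1 : L⁻¹ < 1 := by
    rw [inv_lt_one_iff₀]; right; exact hL1
  have hLinv0 : 0 < L⁻¹ := by positivity
  have hM0 : 0 < M := by rw [hMdef]; have h2 : 0 < 1 - L⁻¹ := by linarith
                         positivity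
  have hid1 : p * ((-y) * M) / (p + 1) = (-y) * D := by
    rw [hpdef, hMdef, hDdef, hLdef]
    field_simp
    ring
  have hid2 : ((-y) * M) / (p + 1) = (-y) * ((σ * η / k) * D) := by
    rw [hpdef, hMdef, hDdef, hLdef]
    field_simp
    ring
  have Gbound : ∀ ζ : ℝ, A * Real.exp (-k * ((m - ζ) + c) / σ) *
      (y' * Real.exp (η * (ζ - c)) - y * M)
      ≤ -(A * (σ * η / k) * L ^ (-(k / (σ * γ))) * D ^ (1 + p)) * y * r ^ p := by
    intro ζ
    have hE : 0 < Real.exp (η * (ζ - c)) := Real.exp_pos _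
    set u := (-y') * Real.exp (η * (ζ - c)) with hudef
    have hu : 0 < u := mul_pos hyy' hE
    have key := key_amgm p ((-y) * M) u hp (mul_pos hyy hM0) hu
    rw [hid1, hid2] at key
    have hexpfac : Real.exp (-k * ((m - ζ) + c) / σ)
        = Real.exp (-((k / σ) * m)) * Real.exp (η * (ζ - c)) ^ p := by
      rw [Real.rpow_def_of_pos hE, Real.log_exp, ← Real.exp_add]
      congr 1
      rw [hpdef]; field_simp; ring
    have hbr : y' * Real.exp (η * (ζ - c)) - y * M = (-y) * M - u := by
      rw [hudef]; ring
    have hup : Real.exp (η * (ζ - c)) ^ p = u ^ p / (-y') ^ p := by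
      rw [hudef, Real.mul_rpow hyy'.le hE.le]
      rw [mul_comm ((-y') ^ p), mul_div_assoc, div_self (Real.rpow_pos_of_pos hyy' p).ne',
        mul_one]
    have hyp' : 0 < (-y') ^ p := Real.rpow_pos_of_pos hyy' p
    rw [hexpfac, hbr, hup]
    have hC : 0 < A * Real.exp (-((k / σ) * m)) / (-y') ^ p := by positivity
    calc A * (Real.exp (-((k / σ) * m)) * (u ^ p / (-y') ^ p)) * ((-y) * M - u)
        = (A * Real.exp (-((k / σ) * m)) / (-y') ^ p) * (u ^ p * ((-y) * M - u)) := by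
          ring
      _ ≤ (A * Real.exp (-((k / σ) * m)) / (-y') ^ p) *
            (((-y) * D) ^ p * ((-y) * ((σ * η / k) * D))) :=
          mul_le_mul_of_nonneg_left key hC.le
      _ = -(A * (σ * η / k) * L ^ (-(k / (σ * γ))) * D ^ (1 + p)) * y * r ^ p := by
          rw [Real.mul_rpow hyy.le hD0.le, hLpow, hDpow, hrp2]
          ring
  have hηm : η * m = (η / γ) * lL := by rw [hmdef]; ring
  refine IsGreatest.csSup_eq ⟨?_, ?_⟩
  · -- attained at ζs
    set ζs := c + (1 / η) * lr + (1 / η) * lD with hζsdef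
    have he : η * (-ζs + m) = (η / γ) * lL - η * c - lr - lD := by
      rw [hζsdef, hmdef]; field_simp; ring
    have habs : |(-ζs + m)| ≤ δinf := by
      have h1 : |η * (-ζs + m)| ≤ η * δinf := by
        rw [he, abs_le]
        constructor
        · linarith [hδη, le_abs_self lr, hlD.le, hlL.le, mul_pos hη hc,
            mul_pos (div_pos hη hγ) hlL]
        · linarith [hδη, neg_le_abs lr, hlD.le, hlL.le, mul_pos hη hc,
            mul_pos (div_pos hη hγ) hlL]
      rw [abs_mul, abs_of_pos hη] at h1
      exact le_of_mul_le_mul_left h1 hη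
    obtain ⟨hw1, hw2⟩ := abs_le.1 habs
    refine ⟨ζs, ?_⟩
    dsimp only
    rw [min_eq_right hw2, max_eq_right hw1,
      show -γ * (ζs + (-ζs + m)) = -(γ * m) from by ring, hexpm]
    have e2 : η * (ζs - c) = lr + lD := by rw [hζsdef]; field_simp; ring
    have e3 : -k * ((-ζs + m) + c) / σ = -((k / σ) * m) + (lr * p + lD * p) := by
      rw [hζsdef, hmdef, hpdef]; field_simp; ring
    have e4 : Real.exp (lr + lD) = r * D := by
      rw [Real.exp_add, hlrdef, hlDdef, Real.exp_log hr, Real.exp_log hD0]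
    have e5 : Real.exp (-((k / σ) * m) + (lr * p + lD * p))
        = Real.exp (-((k / σ) * m)) * (r ^ p * D ^ p) := by
      rw [Real.exp_add, Real.exp_add, hlrdef, hlDdef, ← Real.rpow_def_of_pos hr,
        ← Real.rpow_def_of_pos hD0]
    rw [e2, e3, e4, e5]
    have e6 : y' * (r * D) = y * D := by
      rw [hrdef]; field_simp [hy'.ne]
    rw [e6]
    have e7 : y * D - y * (1 + η / γ * (1 - L⁻¹)) = -(y * ((σ * η / k) * D)) := by
      rw [hDdef, hLdef]; field_simp; ring
    rw [e7, hLpow, hDpow]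
    ring
  · rintro x ⟨ζ, rfl⟩
    dsimp only
    rcases le_total (-ζ + m) δinf with hw1 | hw1
    · rcases le_total (-δinf) (-ζ + m) with hw2 | hw2
      · -- interior region
        rw [min_eq_right hw1, max_eq_right hw2,
          show -γ * (ζ + (-ζ + m)) = -(γ * m) from by ring, hexpm, ← hMdef,
          show -ζ + m = m - ζ from by ring]
        exact Gbound ζ
      · -- ζ ≥ m + δinf, Δ = -δinf
        rw [min_eq_right (show -ζ + m ≤ δinf by linarith), max_eq_left hw2]
        have hζ : m + δinf ≤ ζ := by linarith
        have G := Gbound (m + δinf)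
        rw [show m - (m + δinf) + c = -δinf + c from by ring] at G
        refine le_trans ?_ G
        refine mul_le_mul_of_nonneg_left ?_ (by positivity)
        have h1 : Real.exp (η * (m + δinf - c)) * (1 + η * (ζ - (m + δinf)))
            ≤ Real.exp (η * (ζ - c)) := by
          calc Real.exp (η * (m + δinf - c)) * (1 + η * (ζ - (m + δinf)))
              = Real.exp (η * (m + δinf - c)) *
                (η * (ζ - c) - η * (m + δinf - c) + 1) := by ring
            _ ≤ _ := expLB _ _
        have h2 : Real.exp (-(γ * m)) * (1 - γ * (ζ - (m + δinf)))
            ≤ Real.exp (-γ * (ζ + -δinf)) := by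
          calc Real.exp (-(γ * m)) * (1 - γ * (ζ - (m + δinf)))
              = Real.exp (-(γ * m)) * (-γ * (ζ + -δinf) - -(γ * m) + 1) := by ring
            _ ≤ _ := expLB _ _
        have hB : (-y) * Real.exp (-(γ * m)) ≤ (-y') * Real.exp (η * (m + δinf - c)) := by
          have hlog : Real.log (-y) + -(γ * m) ≤ Real.log (-y') + η * (m + δinf - c) := by
            linarith [hδη, le_abs_self lr, hlD.le, hlL.le, hγm, hηm, hlr_def,
              mul_pos hη hc, mul_pos (div_pos hη hγ) hlL]
          calc (-y) * Real.exp (-(γ * m)) = Real.exp (Real.log (-y) + -(γ * m)) := by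
                rw [Real.exp_add, Real.exp_log hyy]
            _ ≤ Real.exp (Real.log (-y') + η * (m + δinf - c)) := Real.exp_le_exp.2 hlog
            _ = (-y') * Real.exp (η * (m + δinf - c)) := by
                rw [Real.exp_add, Real.exp_log hyy']
        have key := mono3 γ η y y' (ζ - (m + δinf)) (Real.exp (η * (ζ - c)))
          (Real.exp (η * (m + δinf - c))) (Real.exp (-γ * (ζ + -δinf)))
          (Real.exp (-(γ * m))) hγ hη hy hy' (by linarith) h1 h2 hB
        rw [hMdef, ← hexpm]
        linarith [key]
    · -- ζ ≤ m - δinf, Δ = δinf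
      rw [min_eq_left hw1, max_eq_right (show -δinf ≤ δinf by linarith)]
      have hζ : ζ ≤ m - δinf := by linarith
      have G := Gbound (m - δinf)
      rw [show m - (m - δinf) + c = δinf + c from by ring] at G
      refine le_trans ?_ G
      refine mul_le_mul_of_nonneg_left ?_ (by positivity)
      have h1 : Real.exp (η * (m - δinf - c)) * (1 - η * (m - δinf - ζ))
          ≤ Real.exp (η * (ζ - c)) := by
        calc Real.exp (η * (m - δinf - c)) * (1 - η * (m - δinf - ζ))
            = Real.exp (η * (m - δinf - c)) *
              (η * (ζ - c) - η * (m - δinf - c) + 1) := by ring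
          _ ≤ _ := expLB _ _
      have h2 : Real.exp (-(γ * m)) * (1 + γ * (m - δinf - ζ))
          ≤ Real.exp (-γ * (ζ + δinf)) := by
        calc Real.exp (-(γ * m)) * (1 + γ * (m - δinf - ζ))
            = Real.exp (-(γ * m)) * (-γ * (ζ + δinf) - -(γ * m) + 1) := by ring
          _ ≤ _ := expLB _ _
      have hB : (-y') * Real.exp (η * (m - δinf - c)) ≤ (-y) * Real.exp (-(γ * m)) := by
        have hlog : Real.log (-y') + η * (m - δinf - c) ≤ Real.log (-y) + -(γ * m) := by
          linarith [hδη, neg_abs_le lr, hlD.le, hlL.le, hγm, hηm, hlr_def,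
            mul_pos hη hc, mul_pos (div_pos hη hγ) hlL]
        calc (-y') * Real.exp (η * (m - δinf - c)) = Real.exp (Real.log (-y') + η * (m - δinf - c)) := by
              rw [Real.exp_add, Real.exp_log hyy']
          _ ≤ Real.exp (Real.log (-y) + -(γ * m)) := Real.exp_le_exp.2 hlog
          _ = (-y) * Real.exp (-(γ * m)) := by
              rw [Real.exp_add, Real.exp_log hyy]
      have key := mono2 γ η y y' (m - δinf - ζ) (Real.exp (η * (ζ - c)))
        (Real.exp (η * (m - δinf - c))) (Real.exp (-γ * (ζ + δinf)))
        (Real.exp (-(γ * m))) hγ hη hy hy' (by linarith) h1 h2 hB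
      rw [hMdef, ← hexpm]
      linarith [key]

private lemma H1_eq (σ γ η y qq : ℝ) (hσ : 0 < σ) (hγ : 0 < γ) (hη : 0 < η) (hy : y < 0) :
    sSup (Set.range fun z : ℝ => (η * σ ^ 2 / 2) * y * (γ * (z + qq) ^ 2 + η * z ^ 2))
      = (γ * η ^ 2 * σ ^ 2 / (2 * (γ + η))) * qq ^ 2 * y := by
  refine IsGreatest.csSup_eq ⟨⟨-γ * qq / (γ + η), ?_⟩, ?_⟩
  · dsimp only
    field_simp
    ring
  · rintro x ⟨z, rfl⟩
    dsimp only
    have h1 : γ * η / (γ + η) * qq ^ 2 ≤ γ * (z + qq) ^ 2 + η * z ^ 2 := by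
      rw [div_mul_eq_mul_div, div_le_iff₀ (by positivity)]
      nlinarith [sq_nonneg ((γ + η) * z + γ * qq)]
    have h2 : (η * σ ^ 2 / 2) * y ≤ 0 :=
      mul_nonpos_of_nonneg_of_nonpos (by positivity) hy.le
    calc (η * σ ^ 2 / 2) * y * (γ * (z + qq) ^ 2 + η * z ^ 2)
        ≤ (η * σ ^ 2 / 2) * y * (γ * η / (γ + η) * qq ^ 2) :=
          mul_le_mul_of_nonpos_left h1 h2
      _ = (γ * η ^ 2 * σ ^ 2 / (2 * (γ + η))) * qq ^ 2 * y := by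
          field_simp

set_option maxHeartbeats 1000000 in
/-- explicit form of the exchange's Hamiltonian
`H_E(q,y,y₊,y₋) = H¹_E(q,y) + 1_{q>−q̄}·H⁰_E(y,y₋) + 1_{q<q̄}·H⁰_E(y,y₊)`, namely
`(γη²σ²/(2(γ+η)))·q²·y − C₀·y·[1_{q>−q̄}·(y/y₋)^{k/(ση)} + 1_{q<q̄}·(y/y₊)^{k/(ση)}]`. -/
theorem statement4 (A k σ γ η c δinf : ℝ) (qbar q : ℤ) (y yp ym : ℝ)
    (hA : 0 < A) (hk : 0 < k) (hσ : 0 < σ) (hγ : 0 < γ) (hη : 0 < η) (hc : 0 < c)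
    (hqbar : 1 ≤ qbar) (hq : |q| ≤ qbar)
    (hy : y < 0) (hyp : yp < 0) (hym : ym < 0)
    (hδinf : c + Real.log ((1 + σ * γ / k) ^ (1 / η + 1 / γ) /
          (1 - σ ^ 2 * γ * η / ((k + σ * γ) * (k + σ * η))) ^ (1 / η))
        + max |(1 / η) * Real.log (y / yp)| |(1 / η) * Real.log (y / ym)| ≤ δinf) :
    letI Δ : ℝ → ℝ := fun z =>
      max (-δinf) (min δinf (-z + (1 / γ) * Real.log (1 + σ * γ / k)))
    letI H1 : ℝ :=
      sSup (Set.range fun z : ℝ =>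
        (η * σ ^ 2 / 2) * y * (γ * (z + (q : ℝ)) ^ 2 + η * z ^ 2))
    letI H0 : ℝ → ℝ → ℝ := fun yy y' =>
      sSup (Set.range fun ζ : ℝ =>
        A * Real.exp (-k * (Δ ζ + c) / σ) *
          (y' * Real.exp (η * (ζ - c)) -
            yy * (1 + (η / γ) * (1 - Real.exp (-γ * (ζ + Δ ζ))))))
    letI C₀ : ℝ := A * (σ * η / k) * (1 + σ * γ / k) ^ (-(k / (σ * γ))) *
      (1 - σ ^ 2 * γ * η / ((k + σ * γ) * (k + σ * η))) ^ (1 + k / (σ * η))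
    H1 + (if -qbar < q then H0 y ym else 0) + (if q < qbar then H0 y yp else 0)
      = (γ * η ^ 2 * σ ^ 2 / (2 * (γ + η))) * (q : ℝ) ^ 2 * y
        - C₀ * y * ((if -qbar < q then (y / ym) ^ (k / (σ * η)) else 0)
            + (if q < qbar then (y / yp) ^ (k / (σ * η)) else 0)) := by
  have h1 := H1_eq σ γ η y (q : ℝ) hσ hγ hη hy
  have hmr : |(1 / η) * Real.log (y / ym)|
      ≤ max |(1 / η) * Real.log (y / yp)| |(1 / η) * Real.log (y / ym)| := le_max_right _ _
  have hml : |(1 / η) * Real.log (y / yp)|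
      ≤ max |(1 / η) * Real.log (y / yp)| |(1 / η) * Real.log (y / ym)| := le_max_left _ _
  have h0m := H0_eq A k σ γ η c δinf y ym hA hk hσ hγ hη hc hy hym (by linarith)
  have h0p := H0_eq A k σ γ η c δinf y yp hA hk hσ hγ hη hc hy hyp (by linarith)
  beta_reduce
  rw [h1, h0m, h0p]
  by_cases hqm : -qbar < q <;> by_cases hqp : q < qbar <;>
    simp only [hqm, hqp, if_true, if_false] <;> ring
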